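/- Let F and B be n × n column-stochastic matrices, let 0 < α₁, α₂, α₃ < 1, and for d ∈ ℝⁿ let R(d) denote the unique solution t of the RepRank equation t = α₁ F P₊(t) + α₂ B P₋(t) + α₃ d. Then R is Lipschitz continuous in the ℓ¹ norm with constant α₃ / (1 − max(α₁, α₂)): for all d₁, d₂ ∈ ℝⁿ, ‖R(d₁) − R(d₂)‖₁ ≤ (α₃ / (1 − max(α₁, α₂))) ‖d₁ − d₂‖₁. -/
import Mathlib


open Finset Filter

/-- Replace negative components by zero. -/
def Ppos {n : ℕ} (t : Fin n → ℝ) : Fin n → ℝ := fun i => max (t i) 0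

/-- Replace positive components by zero. -/
def Pneg {n : ℕ} (t : Fin n → ℝ) : Fin n → ℝ := fun i => min (t i) 0

/-- ℓ¹ norm on ℝⁿ. -/
def l1 {n : ℕ} (x : Fin n → ℝ) : ℝ := ∑ i, |x i|

/-- A matrix is column-stochastic if entries are nonnegative and each column sums to 1. -/
def ColStochastic {n : ℕ} (F : Matrix (Fin n) (Fin n) ℝ) : Prop :=
  (∀ i j, 0 ≤ F i j) ∧ ∀ j, ∑ i, F i j = 1

lemma l1_nonneg {n : ℕ} (x : Fin n → ℝ) : 0 ≤ l1 x :=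
  Finset.sum_nonneg fun i _ => abs_nonneg _

lemma l1_add_le {n : ℕ} (x y : Fin n → ℝ) : l1 (x + y) ≤ l1 x + l1 y := by
  rw [l1, l1, l1, ← Finset.sum_add_distrib]
  exact Finset.sum_le_sum fun i _ => abs_add_le _ _

lemma l1_smul {n : ℕ} (c : ℝ) (x : Fin n → ℝ) : l1 (c • x) = |c| * l1 x := by
  rw [l1, l1, Finset.mul_sum]
  exact Finset.sum_congr rfl fun i _ => by simp [abs_mul]

lemma l1_mulVec_le {n : ℕ} (F : Matrix (Fin n) (Fin n) ℝ) (hF : ColStochastic F)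
    (x : Fin n → ℝ) : l1 (F.mulVec x) ≤ l1 x := by
  calc l1 (F.mulVec x) ≤ ∑ i, ∑ j, F i j * |x j| := by
        refine Finset.sum_le_sum fun i _ => ?_
        calc |F.mulVec x i| ≤ ∑ j, |F i j * x j| := by
              rw [Matrix.mulVec, dotProduct]
              exact Finset.abs_sum_le_sum_abs _ _
          _ = ∑ j, F i j * |x j| := Finset.sum_congr rfl fun j _ => by
              rw [abs_mul, abs_of_nonneg (hF.1 i j)]
    _ = ∑ j, (∑ i, F i j) * |x j| := by
        rw [Finset.sum_comm]
        exact Finset.sum_congr rfl fun j _ => by rw [Finset.sum_mul]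
    _ = l1 x := by
        rw [l1]; exact Finset.sum_congr rfl fun j _ => by rw [hF.2 j, one_mul]

lemma pp_abs (a b : ℝ) : |max a 0 - max b 0| + |min a 0 - min b 0| = |a - b| := by
  rcases le_total a 0 with ha | ha <;> rcases le_total b 0 with hb | hb
  · rw [max_eq_right ha, max_eq_right hb, min_eq_left ha, min_eq_left hb]
    simp
  · rw [max_eq_right ha, max_eq_left hb, min_eq_left ha, min_eq_right hb,
      zero_sub, abs_neg, sub_zero, abs_of_nonneg hb, abs_of_nonpos ha,
      abs_of_nonpos (by linarith : a - b ≤ 0)]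
    ring
  · rw [max_eq_left ha, max_eq_right hb, min_eq_right ha, min_eq_left hb,
      sub_zero, zero_sub, abs_neg, abs_of_nonneg ha, abs_of_nonpos hb,
      abs_of_nonneg (by linarith : 0 ≤ a - b)]
    ring
  · rw [max_eq_left ha, max_eq_left hb, min_eq_right ha, min_eq_right hb]
    simp

theorem repRank_lipschitz {n : ℕ} (F B : Matrix (Fin n) (Fin n) ℝ)
    (hF : ColStochastic F) (hB : ColStochastic B)
    (α₁ α₂ α₃ : ℝ) (hα₁ : 0 < α₁) (hα₁' : α₁ < 1) (hα₂ : 0 < α₂) (hα₂' : α₂ < 1)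
    (hα₃ : 0 < α₃) (hα₃' : α₃ < 1)
    (R : (Fin n → ℝ) → (Fin n → ℝ))
    (hR : ∀ d, R d = α₁ • F.mulVec (Ppos (R d)) + α₂ • B.mulVec (Pneg (R d)) + α₃ • d)
    (d₁ d₂ : Fin n → ℝ) :
    l1 (R d₁ - R d₂) ≤ (α₃ / (1 - max α₁ α₂)) * l1 (d₁ - d₂) := by
  set t := R d₁ with ht
  set s := R d₂ with hs
  set M := max α₁ α₂ with hM
  have hM1 : M < 1 := max_lt hα₁' hα₂'
  have hM0 : 0 < 1 - M := by linarith
  have key : t - s = α₁ • F.mulVec (Ppos t - Ppos s) + α₂ • B.mulVec (Pneg t - Pneg s)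
      + α₃ • (d₁ - d₂) := by
    conv_lhs => rw [ht, hs, hR d₁, hR d₂]
    rw [Matrix.mulVec_sub, Matrix.mulVec_sub]
    ext i
    simp [smul_sub]
    ring
  have hsplit : l1 (Ppos t - Ppos s) + l1 (Pneg t - Pneg s) = l1 (t - s) := by
    rw [l1, l1, l1, ← Finset.sum_add_distrib]
    exact Finset.sum_congr rfl fun i _ => pp_abs (t i) (s i)
  have hb1 : l1 (t - s) ≤ M * l1 (t - s) + α₃ * l1 (d₁ - d₂) := by
    calc l1 (t - s) ≤ l1 (α₁ • F.mulVec (Ppos t - Ppos s) + α₂ • B.mulVec (Pneg t - Pneg s))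
            + l1 (α₃ • (d₁ - d₂)) := by rw [key]; exact l1_add_le _ _
      _ ≤ l1 (α₁ • F.mulVec (Ppos t - Ppos s)) + l1 (α₂ • B.mulVec (Pneg t - Pneg s))
            + l1 (α₃ • (d₁ - d₂)) := by linarith [l1_add_le (α₁ • F.mulVec (Ppos t - Ppos s)) (α₂ • B.mulVec (Pneg t - Pneg s))]
      _ = α₁ * l1 (F.mulVec (Ppos t - Ppos s)) + α₂ * l1 (B.mulVec (Pneg t - Pneg s))
            + α₃ * l1 (d₁ - d₂) := by
            rw [l1_smul, l1_smul, l1_smul, abs_of_pos hα₁, abs_of_pos hα₂, abs_of_pos hα₃]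
      _ ≤ M * l1 (Ppos t - Ppos s) + M * l1 (Pneg t - Pneg s) + α₃ * l1 (d₁ - d₂) := by
            have h1 := l1_mulVec_le F hF (Ppos t - Ppos s)
            have h2 := l1_mulVec_le B hB (Pneg t - Pneg s)
            have hm1 : α₁ ≤ M := le_max_left _ _
            have hm2 : α₂ ≤ M := le_max_right _ _
            have n1 := l1_nonneg (Ppos t - Ppos s)
            have n2 := l1_nonneg (Pneg t - Pneg s)
            nlinarith [l1_nonneg (F.mulVec (Ppos t - Ppos s)), l1_nonneg (B.mulVec (Pneg t - Pneg s))]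
      _ = M * l1 (t - s) + α₃ * l1 (d₁ - d₂) := by rw [← hsplit]; ring
  rw [div_mul_eq_mul_div, le_div_iff₀ hM0]
  linarith
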